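/- If N(η) ≠ (-1)^{nk} and f, g ∈ G(η,r) satisfy f(α_i) = g(α_i) for all elements α_1, ..., α_n of an F_q-basis of F_{q^n}, then f = g (as polynomials, i.e., coefficientwise). -/

import Mathlib

open Polynomial

/-- If N(η) ≠ (-1)^{nk} and f, g ∈ G(η,r) agree on all elements of
an F_q-basis of F_{q^n}, then f = g coefficientwise. -/
theorem stmt_11 (q n : ℕ) (hq : IsPrimePow q) (hn : 0 < n)
    (F L : Type) [Field F] [Fintype F] [Field L] [Fintype L] [Algebra F L]
    (hF : Fintype.card F = q) (hL : Fintype.card L = q ^ n)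
    (k r : ℕ) (hk : 0 < k) (hkn : k < n) (η : L)
    (hη : η ^ ((q ^ n - 1) / (q - 1)) ≠ (-1) ^ (n * k))
    (B : Module.Basis (Fin n) F L) (c c' : Fin k → L)
    (hagree : ∀ j : Fin n,
      (∑ i : Fin k, c i * (B j) ^ q ^ (i : ℕ)) + η * (c ⟨0, hk⟩) ^ q ^ r * (B j) ^ q ^ k
      = (∑ i : Fin k, c' i * (B j) ^ q ^ (i : ℕ))
          + η * (c' ⟨0, hk⟩) ^ q ^ r * (B j) ^ q ^ k) :
    c = c' := by
  classical
  -- characteristic setup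
  obtain ⟨p, hpF⟩ := CharP.exists F
  haveI : CharP F p := hpF
  haveI hLp : CharP L p := charP_of_injective_algebraMap (algebraMap F L).injective p
  have hpprime : p.Prime := CharP.char_is_prime F p
  haveI : Fact p.Prime := ⟨hpprime⟩
  obtain ⟨m, -, hqm⟩ := FiniteField.card F p
  rw [hF] at hqm
  -- coefficients of the difference
  set d : Fin k → L := fun i => c i - c' i with hd
  set e : L := η * (c ⟨0, hk⟩) ^ q ^ r - η * (c' ⟨0, hk⟩) ^ q ^ r with he
  have hpow_add : ∀ (j : ℕ) (x y : L), (x + y) ^ q ^ j = x ^ q ^ j + y ^ q ^ j := by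
    intro j x y
    rw [hqm, ← pow_mul]
    exact add_pow_char_pow ..
  have hsmul : ∀ (j : ℕ) (a : F) (x : L), (a • x) ^ q ^ j = a • x ^ q ^ j := by
    intro j a x
    rw [Algebra.smul_def, Algebra.smul_def, mul_pow, ← map_pow, ← hF,
      FiniteField.pow_card_pow]
  -- the difference as an F-linear map
  let φ : L →ₗ[F] L :=
    { toFun := fun x => (∑ i : Fin k, d i * x ^ q ^ (i : ℕ)) + e * x ^ q ^ k
      map_add' := by
        intro x y
        simp only [hpow_add, mul_add, Finset.sum_add_distrib]
        ring
      map_smul' := by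
        intro a x
        simp only [hsmul, RingHom.id_apply, Finset.smul_sum, smul_add, mul_smul_comm] }
  have hφ : φ = 0 := by
    apply B.ext
    intro j
    show (∑ i : Fin k, d i * (B j) ^ q ^ (i : ℕ)) + e * (B j) ^ q ^ k = 0
    simp only [hd, he, sub_mul, Finset.sum_sub_distrib]
    linear_combination hagree j
  have hφ0 : ∀ x : L, (∑ i : Fin k, d i * x ^ q ^ (i : ℕ)) + e * x ^ q ^ k = 0 := by
    intro x
    have := LinearMap.congr_fun hφ x
    simpa [φ] using this
  -- the associated polynomial
  set P : L[X] := (∑ i : Fin k, C (d i) * X ^ q ^ (i : ℕ)) + C e * X ^ q ^ k with hP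
  have hq2 : 2 ≤ q := hq.one_lt
  have heval : ∀ x : L, P.eval x = 0 := by
    intro x
    simpa [hP, eval_finset_sum] using hφ0 x
  have hdeg : P.natDegree < Fintype.card L := by
    rw [hL]
    have h1 : (∑ i : Fin k, C (d i) * X ^ q ^ (i : ℕ) : L[X]).natDegree ≤ q ^ k :=
      natDegree_sum_le_of_forall_le _ _ fun i _ =>
        (natDegree_C_mul_X_pow_le _ _).trans
          (Nat.pow_le_pow_right (by omega) (le_of_lt i.2))
    have h2 : (C e * X ^ q ^ k : L[X]).natDegree ≤ q ^ k := natDegree_C_mul_X_pow_le _ _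
    have hlt : q ^ k < q ^ n := Nat.pow_lt_pow_right (by omega) hkn
    calc P.natDegree ≤ max _ _ := natDegree_add_le _ _
      _ ≤ q ^ k := max_le h1 h2
      _ < q ^ n := hlt
  have hP0 : P = 0 :=
    P.eq_zero_of_natDegree_lt_card_of_eval_eq_zero Function.injective_id
      (fun x => heval x) (by simpa using hdeg)
  -- extract the coefficients
  funext i
  have hcoeff := congrArg (fun Q => Polynomial.coeff Q (q ^ (i : ℕ))) hP0
  have hne : ¬ (q ^ (i : ℕ) = q ^ k) := by
    intro h
    have := Nat.pow_right_injective hq2 h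
    omega
  have hiff : ∀ i' : Fin k, q ^ (i : ℕ) = q ^ (i' : ℕ) ↔ i' = i := by
    intro i'
    constructor
    · intro h
      have := Nat.pow_right_injective hq2 h
      exact Fin.ext this.symm
    · rintro rfl; rfl
  simp only [hP, finset_sum_coeff, coeff_add, coeff_C_mul, coeff_X_pow, coeff_zero,
    mul_ite, mul_one, mul_zero, hiff, if_neg hne, add_zero,
    Finset.sum_ite_eq' Finset.univ i d] at hcoeff
  have : d i = 0 := by simpa using hcoeff
  have := sub_eq_zero.mp this
  exact this
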